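/- Let N ≥ 3. On the periodic N-qubit chain define H^{(2)}_{ImHop} := (i/2) Σ_{j=1}^N (|110⟩⟨011| − |011⟩⟨110|)_{j,j+1,j+2}. Then H^{(2)}_{ImHop}|W²⟩ = 0, and for a contiguous segment Λ = {ℓ,…,r} (no wrap-around) the truncation H^{(2)}_{ImHop,Λ} := (i/2) Σ_{j=ℓ}^{r−2} (|110⟩⟨011| − |011⟩⟨110|)_{j,j+1,j+2} satisfies H^{(2)}_{ImHop,Λ}|W²⟩ = (i/2)(n_ℓ n_{ℓ+1} − n_{r−1} n_r)|W²⟩. -/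

import Mathlib

open scoped BigOperators

noncomputable section

/-- Configurations of `N` qubits. -/
abbrev Cfg (N : ℕ) := Fin N → Fin 2

/-- The `N`-qubit Hilbert space `⊗_{j=1}^N ℂ²`, identified with `ℂ^(Fin N → Fin 2)`. -/
abbrev QS (N : ℕ) := EuclideanSpace ℂ (Cfg N)

/-- Computational basis state `|t⟩`. -/
def ket {N : ℕ} (t : Cfg N) : QS N := EuclideanSpace.single t 1

/-- Configuration with a single `1` at site `j`. -/
def eConf {N : ℕ} (j : Fin N) : Cfg N := fun k => if k = j then 1 else 0

/-- The all-zero product state `|0̄⟩`. -/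
def zeroKet (N : ℕ) : QS N := ket (fun _ => 0)

/-- The W state `|W⟩ = (1/√N) ∑_j |e_j⟩`. -/
def Wst (N : ℕ) : QS N := (Real.sqrt N : ℂ)⁻¹ • ∑ j : Fin N, ket (eConf j)

/-- Hard-core boson creation operator `s_j† = |1⟩⟨0|` acting at site `j`. -/
def aDag {N : ℕ} (j : Fin N) : QS N →ₗ[ℂ] QS N where
  toFun ψ := WithLp.toLp 2 (fun s => if s j = 1 then ψ (Function.update s j 0) else 0)
  map_add' ψ φ := by ext s; by_cases h : s j = 1 <;> simp [h]
  map_smul' c ψ := by ext s; by_cases h : s j = 1 <;> simp [h]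

/-- Hard-core boson annihilation operator `s_j = |0⟩⟨1|` acting at site `j`. -/
def aOp {N : ℕ} (j : Fin N) : QS N →ₗ[ℂ] QS N where
  toFun ψ := WithLp.toLp 2 (fun s => if s j = 0 then ψ (Function.update s j 1) else 0)
  map_add' ψ φ := by ext s; by_cases h : s j = 0 <;> simp [h]
  map_smul' c ψ := by ext s; by_cases h : s j = 0 <;> simp [h]

/-- Number operator `n_j = s_j† s_j = |1⟩⟨1|_j`. -/
def nOp {N : ℕ} (j : Fin N) : QS N →ₗ[ℂ] QS N := aDag j ∘ₗ aOp j

/-- The imaginary-hopping Hamiltonian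
`H_ImHop = (i/2) ∑_{j=1}^N (s_j† s_{j+1} − s_{j+1}† s_j)` on the periodic chain. -/
def HImHop (N : ℕ) [NeZero N] : QS N →ₗ[ℂ] QS N :=
  (Complex.I / 2) • ∑ j : Fin N, (aDag j ∘ₗ aOp (j + 1) - aDag (j + 1) ∘ₗ aOp j)

/-- Two-particle Dicke state `|W²⟩ = (1/√C(N,2)) ∑_{j<k} s_j† s_k† |0̄⟩`. -/
def W2 (N : ℕ) : QS N :=
  (Real.sqrt (N.choose 2) : ℂ)⁻¹ •
    ∑ p ∈ Finset.univ.filter (fun p : Fin N × Fin N => p.1 < p.2),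
      ket (fun k => if k = p.1 ∨ k = p.2 then 1 else 0)

/-- The two-particle imaginary-hopping Hamiltonian
`H²_ImHop = (i/2) ∑_j (s_j† s_{j+1}† s_{j+1} s_{j+2} − s_{j+2}† s_{j+1}† s_{j+1} s_j)`
(equivalently `(i/2) ∑_j (|110⟩⟨011| − |011⟩⟨110|)_{j,j+1,j+2}`), periodic indexing. -/
def H2ImHop (N : ℕ) [NeZero N] : QS N →ₗ[ℂ] QS N :=
  (Complex.I / 2) •
    ∑ j : Fin N,
      (aDag j ∘ₗ aDag (j + 1) ∘ₗ aOp (j + 1) ∘ₗ aOp (j + 1 + 1)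
        - aDag (j + 1 + 1) ∘ₗ aDag (j + 1) ∘ₗ aOp (j + 1) ∘ₗ aOp j)


lemma aDag_apply {N : ℕ} (j : Fin N) (ψ : QS N) (s : Cfg N) :
    aDag j ψ s = if s j = 1 then ψ (Function.update s j 0) else 0 := rfl

lemma aOp_apply {N : ℕ} (j : Fin N) (ψ : QS N) (s : Cfg N) :
    aOp j ψ s = if s j = 0 then ψ (Function.update s j 1) else 0 := rfl

lemma nOp_apply {N : ℕ} (j : Fin N) (ψ : QS N) (s : Cfg N) :
    nOp j ψ s = if s j = 1 then ψ s else 0 := by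
  by_cases h : s j = 1
  · have hs : Function.update s j (1:Fin 2) = s := funext fun k => by
      by_cases hk : k = j <;> simp [hk, h, Function.update_apply]
    simp only [nOp, LinearMap.comp_apply, aDag_apply, aOp_apply, h, if_true,
      Function.update_self]
    rw [Function.update_idem, hs]
  · simp [nOp, aDag_apply, aOp_apply, h]

lemma nOp_nOp_apply {N : ℕ} (a b : Fin N) (ψ : QS N) (s : Cfg N) :
    (nOp a ∘ₗ nOp b) ψ s = if s a = 1 ∧ s b = 1 then ψ s else 0 := by
  simp only [LinearMap.comp_apply, nOp_apply]
  by_cases ha : s a = 1 <;> by_cases hb : s b = 1 <;> simp [ha, hb, nOp_apply]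

lemma term_apply {N : ℕ} (j₀ j₁ j₂ : Fin N) (h01 : j₀ ≠ j₁) (h02 : j₀ ≠ j₂) (h12 : j₁ ≠ j₂)
    (ψ : QS N) (s : Cfg N) :
    (aDag j₀ ∘ₗ aDag j₁ ∘ₗ aOp j₁ ∘ₗ aOp j₂) ψ s =
      if s j₀ = 1 ∧ s j₁ = 1 ∧ s j₂ = 0 then
        ψ (Function.update (Function.update s j₀ 0) j₂ 1) else 0 := by
  simp only [LinearMap.comp_apply, aDag_apply, aOp_apply]
  by_cases h0 : s j₀ = 1
  · by_cases h1 : s j₁ = 1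
    · by_cases h2 : s j₂ = 0
      · simp only [h0, h1, h2, Function.update_apply, if_true, Function.update_idem,
          Function.update_self, if_neg (Ne.symm h01), if_neg (Ne.symm h12), if_neg h12]
        have harg : Function.update (Function.update (Function.update
            (Function.update s j₀ 0) j₁ 0) j₁ 1) j₂ 1
            = Function.update (Function.update s j₀ 0) j₂ 1 := funext fun k => by
          by_cases hk2 : k = j₂
          · simp [hk2, Function.update_apply]
          · by_cases hk1 : k = j₁
            · simp [hk2, hk1, Function.update_apply, if_neg (Ne.symm h01), h1, if_neg h12]
            · simp [hk2, hk1, Function.update_apply]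
        simp only [ite_self, if_pos rfl, h2, and_true, h0, h1, true_and, if_true]
        exact congrArg ψ (by rwa [Function.update_idem] at harg)
      · simp [h0, h1, h2, Function.update_apply, h01.symm, h12.symm, h02.symm]
    · simp [h0, h1, Function.update_apply, h01.symm, h12.symm, h02.symm]
  · simp [h0]


def cardOnes {N : ℕ} (s : Cfg N) : ℕ := (Finset.univ.filter fun k => s k = 1).card


lemma fin2_cases (x : Fin 2) : x = 0 ∨ x = 1 := by omega

lemma D2_apply (N : ℕ) (s : Cfg N) :
    (∑ p ∈ Finset.univ.filter (fun p : Fin N × Fin N => p.1 < p.2),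
      ket (fun k => if k = p.1 ∨ k = p.2 then 1 else 0)) s
    = if cardOnes s = 2 then 1 else 0 := by
  classical
  have hsum : (∑ p ∈ Finset.univ.filter (fun p : Fin N × Fin N => p.1 < p.2),
      ket (fun k => if k = p.1 ∨ k = p.2 then 1 else 0)) s
      = ∑ p ∈ Finset.univ.filter (fun p : Fin N × Fin N => p.1 < p.2),
        (if s = (fun k => if k = p.1 ∨ k = p.2 then 1 else 0) then (1:ℂ) else 0) := by
    rw [WithLp.ofLp_sum, Finset.sum_apply]
    refine Finset.sum_congr rfl fun p _ => ?_
    simp [ket, EuclideanSpace.single_apply]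
  rw [hsum]
  by_cases h2 : cardOnes s = 2
  · obtain ⟨a, b, hab, hset⟩ := Finset.card_eq_two.1 h2
    -- wlog a < b
    have key : ∀ a b : Fin N, a < b →
        (Finset.univ.filter fun k => s k = 1) = {a, b} →
        (∑ p ∈ Finset.univ.filter (fun p : Fin N × Fin N => p.1 < p.2),
          (if s = (fun k => if k = p.1 ∨ k = p.2 then 1 else 0) then (1:ℂ) else 0)) = 1 := by
      intro a b hab hset
      have hmem : ∀ k, s k = 1 ↔ (k = a ∨ k = b) := by
        intro k
        have := Finset.ext_iff.1 hset k
        simpa using this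
      have hs : s = (fun k => if k = a ∨ k = b then 1 else 0) := by
        funext k
        by_cases hk : k = a ∨ k = b
        · simp [hk, (hmem k).2 hk]
        · rcases fin2_cases (s k) with h | h
          · simp [hk, h]
          · exact absurd ((hmem k).1 h) hk
      rw [Finset.sum_eq_single (a, b)]
      · simp [hs]
      · intro p hp hpab
        rw [if_neg]
        intro hsp
        apply hpab
        have hp' : p.1 < p.2 := (Finset.mem_filter.1 hp).2
        -- from hs and hsp : the indicator functions agree
        have heq : ∀ k : Fin N, (k = a ∨ k = b) ↔ (k = p.1 ∨ k = p.2) := by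
          intro k
          constructor
          · intro hk
            by_contra hnk
            have := congrFun hsp k
            rw [hs] at this
            simp [hk, hnk] at this
          · intro hk
            by_contra hnk
            have := congrFun hsp k
            rw [hs] at this
            simp [hk, hnk] at this
        have ha' := (heq a).1 (Or.inl rfl)
        have hb' := (heq b).1 (Or.inr rfl)
        have hp1 := (heq p.1).2 (Or.inl rfl)
        have hp2 := (heq p.2).2 (Or.inr rfl)
        rcases ha' with h1 | h1 <;> rcases hb' with h2' | h2'
        · exact absurd (h1.trans h2'.symm) hab.ne
        · exact Prod.ext h1.symm h2'.symm
        · exfalso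
          rw [← h2', ← h1] at hp'
          exact absurd hab (not_lt.2 hp'.le)
        · exact absurd (h1.trans h2'.symm) hab.ne
      · intro hnot
        exfalso
        apply hnot
        simp [Finset.mem_filter, hab]
    rw [if_pos h2]
    rcases lt_or_gt_of_ne hab with h | h
    · exact key a b h hset
    · exact key b a h (by rw [hset, Finset.pair_comm])
  · rw [if_neg h2]
    apply Finset.sum_eq_zero
    intro p hp
    rw [if_neg]
    intro hsp
    apply h2
    have hp' : p.1 < p.2 := (Finset.mem_filter.1 hp).2
    have hset : (Finset.univ.filter fun k => s k = 1) = {p.1, p.2} := by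
      ext k
      simp only [Finset.mem_filter, Finset.mem_univ, true_and, Finset.mem_insert,
        Finset.mem_singleton, congrFun hsp k]
      by_cases hk : k = p.1 ∨ k = p.2 <;> simp [hk]
    rw [cardOnes, hset, Finset.card_insert_of_notMem (by simp [hp'.ne]),
      Finset.card_singleton]

lemma cardOnes_move {N : ℕ} (s : Cfg N) (a b : Fin N) (hab : a ≠ b)
    (ha : s a = 1) (hb : s b = 0) :
    cardOnes (Function.update (Function.update s a 0) b 1) = cardOnes s := by
  classical
  have hset : (Finset.univ.filter fun k =>
      (Function.update (Function.update s a 0) b 1) k = 1)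
      = insert b ((Finset.univ.filter fun k => s k = 1).erase a) := by
    ext k
    by_cases hkb : k = b
    · simp [hkb, Function.update_apply]
    · by_cases hka : k = a
      · simp [hka, hkb, Function.update_apply, hab, Ne.symm hab]
      · simp [hka, hkb, Function.update_apply]
  have hbnot : b ∉ (Finset.univ.filter fun k => s k = 1).erase a := by
    simp [hb]
  have hamem : a ∈ (Finset.univ.filter fun k => s k = 1) := by simp [ha]
  rw [cardOnes, hset, Finset.card_insert_of_notMem hbnot,
    Finset.card_erase_of_mem hamem, cardOnes]
  have : 0 < (Finset.univ.filter fun k => s k = 1).card :=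
    Finset.card_pos.2 ⟨a, hamem⟩
  omega

lemma W2_apply (N : ℕ) (s : Cfg N) :
    W2 N s = (Real.sqrt (N.choose 2) : ℂ)⁻¹ * (if cardOnes s = 2 then 1 else 0) := by
  rw [W2]
  rw [PiLp.smul_apply, D2_apply]
  simp

lemma key_lemma (N : ℕ) [NeZero N] (j₀ j₁ j₂ : Fin N)
    (h01 : j₀ ≠ j₁) (h02 : j₀ ≠ j₂) (h12 : j₁ ≠ j₂) :
    (aDag j₀ ∘ₗ aDag j₁ ∘ₗ aOp j₁ ∘ₗ aOp j₂
      - aDag j₂ ∘ₗ aDag j₁ ∘ₗ aOp j₁ ∘ₗ aOp j₀) (W2 N)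
    = (nOp j₀ ∘ₗ nOp j₁) (W2 N) - (nOp j₁ ∘ₗ nOp j₂) (W2 N) := by
  ext s
  have hW : ∀ t : Cfg N, W2 N t
      = (Real.sqrt (N.choose 2) : ℂ)⁻¹ * (if cardOnes t = 2 then 1 else 0) := W2_apply N
  simp only [LinearMap.sub_apply, PiLp.sub_apply]
  rw [term_apply j₀ j₁ j₂ h01 h02 h12, term_apply j₂ j₁ j₀ h12.symm h02.symm h01.symm,
    nOp_nOp_apply, nOp_nOp_apply]
  rcases fin2_cases (s j₁) with h1 | h1
  · simp [h1]
  · rcases fin2_cases (s j₀) with h0 | h0 <;> rcases fin2_cases (s j₂) with h2 | h2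
    · simp [h0, h1, h2]
    · rw [if_neg (by simp [h0]), if_pos ⟨h2, h1, h0⟩, if_neg (by simp [h0]),
        if_pos ⟨h1, h2⟩, hW, hW, cardOnes_move s j₂ j₀ h02.symm h2 h0]
    · rw [if_pos ⟨h0, h1, h2⟩, if_neg (by simp [h2]), if_pos ⟨h0, h1⟩,
        if_neg (by simp [h2]), hW, hW, cardOnes_move s j₀ j₂ h02 h0 h2]
    · rw [if_neg (by simp [h2]), if_neg (by simp [h0]), if_pos ⟨h0, h1⟩, if_pos ⟨h1, h2⟩]
      ring

lemma add_one_val {N : ℕ} [NeZero N] (h3 : 3 ≤ N) (j : Fin N) :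
    ((j + 1 : Fin N) : ℕ) = (j.val + 1) % N := by
  rw [Fin.add_def, Fin.val_one', Nat.mod_eq_of_lt (show 1 < N by omega)]

lemma add_one_val' {N : ℕ} [NeZero N] (h3 : 3 ≤ N) (j : Fin N) (h : j.val + 1 < N) :
    ((j + 1 : Fin N) : ℕ) = j.val + 1 := by
  rw [add_one_val h3, Nat.mod_eq_of_lt h]

lemma ne_add_one {N : ℕ} [NeZero N] (h3 : 3 ≤ N) (j : Fin N) : j ≠ j + 1 := by
  intro h
  have hv := congrArg Fin.val h
  rw [add_one_val h3] at hv
  have hj := j.isLt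
  by_cases h' : j.val + 1 < N
  · rw [Nat.mod_eq_of_lt h'] at hv; omega
  · have h1 : j.val + 1 = N := by omega
    rw [h1, Nat.mod_self] at hv; omega

lemma ne_add_two {N : ℕ} [NeZero N] (h3 : 3 ≤ N) (j : Fin N) : j ≠ j + 1 + 1 := by
  intro h
  have hv := congrArg Fin.val h
  rw [add_one_val h3, add_one_val h3] at hv
  have hj := j.isLt
  by_cases h' : j.val + 1 < N
  · rw [Nat.mod_eq_of_lt h'] at hv
    by_cases h'' : j.val + 2 < N
    · rw [Nat.mod_eq_of_lt h''] at hv; omega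
    · rw [show j.val + 1 + 1 = N from by omega, Nat.mod_self] at hv; omega
  · have h1 : j.val + 1 = N := by omega
    rw [h1, Nat.mod_self, Nat.mod_eq_of_lt (by omega)] at hv; omega

def Fop (N : ℕ) [NeZero N] (j : Fin N) : QS N := (nOp j ∘ₗ nOp (j + 1)) (W2 N)

lemma key_lemma' (N : ℕ) [NeZero N] (h3 : 3 ≤ N) (j : Fin N) :
    (aDag j ∘ₗ aDag (j + 1) ∘ₗ aOp (j + 1) ∘ₗ aOp (j + 1 + 1)
      - aDag (j + 1 + 1) ∘ₗ aDag (j + 1) ∘ₗ aOp (j + 1) ∘ₗ aOp j) (W2 N)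
    = Fop N j - Fop N (j + 1) :=
  key_lemma N j (j+1) (j+1+1) (ne_add_one h3 j) (ne_add_two h3 j) (ne_add_one h3 (j+1))

open Fin.NatCast in
lemma telescope_sum (N : ℕ) [NeZero N] (hN : 3 ≤ N) (ℓ r : Fin N) (hlr : ℓ < r) :
    ∑ j : Fin N,
        (if ℓ ≤ j ∧ (j : ℕ) + 2 ≤ (r : ℕ) then Fop N j - Fop N (j + 1) else 0)
      = Fop N ℓ - Fop N (r - 1) := by
  classical
  set n : ℕ := r.val - 1 - ℓ.val with hn
  have hℓr : ℓ.val < r.val := hlr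
  have hrN : r.val < N := r.isLt
  have hval : ∀ m : ℕ, m < N → ((ℓ + (m : Fin N) : Fin N) : ℕ) = (ℓ.val + m) % N := by
    intro m hm
    simp only [Fin.add_def, Fin.val_natCast, Fin.val_mk]
    rw [Nat.mod_eq_of_lt hm]
  rw [← Finset.sum_filter]
  have hbij : ∑ j ∈ Finset.univ.filter (fun j : Fin N => ℓ ≤ j ∧ (j:ℕ) + 2 ≤ (r:ℕ)),
      (Fop N j - Fop N (j + 1))
      = ∑ i ∈ Finset.range n, (Fop N (ℓ + (i:Fin N)) - Fop N (ℓ + (i:Fin N) + 1)) := by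
    refine Finset.sum_nbij' (fun j => j.val - ℓ.val) (fun i => ℓ + (i : Fin N)) ?_ ?_ ?_ ?_ ?_
    · intro j hj
      simp only [Finset.mem_filter, Finset.mem_univ, true_and, Fin.le_def] at hj
      simp only [Finset.mem_range]
      omega
    · intro i hi
      simp only [Finset.mem_range] at hi
      simp only [Finset.mem_filter, Finset.mem_univ, true_and, Fin.le_def,
        hval i (by omega), Nat.mod_eq_of_lt (show ℓ.val + i < N by omega)]
      omega
    · intro j hj
      simp only [Finset.mem_filter, Finset.mem_univ, true_and, Fin.le_def] at hj
      apply Fin.ext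
      rw [hval _ (by omega), Nat.mod_eq_of_lt (by omega)]
      omega
    · intro i hi
      simp only [Finset.mem_range] at hi
      rw [hval i (by omega), Nat.mod_eq_of_lt (by omega)]
      omega
    · intro j hj
      simp only [Finset.mem_filter, Finset.mem_univ, true_and, Fin.le_def] at hj
      have hj' : ℓ + ((j.val - ℓ.val : ℕ) : Fin N) = j := by
        apply Fin.ext
        rw [hval _ (by omega), Nat.mod_eq_of_lt (by omega)]
        omega
      simp only [hj']
  rw [hbij]
  have hstep : ∀ i : ℕ, Fop N (ℓ + (i:Fin N) + 1) = Fop N (ℓ + ((i+1 : ℕ):Fin N)) := by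
    intro i
    push_cast
    simp only [Nat.cast_add, Nat.cast_one, add_assoc]
  have htel : ∑ i ∈ Finset.range n, (Fop N (ℓ + (i:Fin N)) - Fop N (ℓ + (i:Fin N) + 1))
      = Fop N (ℓ + ((0:ℕ):Fin N)) - Fop N (ℓ + (n:Fin N)) := by
    rw [Finset.sum_congr rfl (fun i _ => by
      rw [hstep i] :
      ∀ i ∈ Finset.range n, (Fop N (ℓ + (i:Fin N)) - Fop N (ℓ + (i:Fin N) + 1))
        = (fun m : ℕ => Fop N (ℓ + (m:Fin N))) i - (fun m : ℕ => Fop N (ℓ + (m:Fin N))) (i+1))]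
    exact Finset.sum_range_sub' _ n
  rw [htel]
  congr 2
  · simp
  · have harg : ℓ + (n : Fin N) = r - 1 := by
      rw [eq_sub_iff_add_eq]
      apply Fin.ext
      rw [add_one_val' hN _ (by rw [hval n (by omega), Nat.mod_eq_of_lt (by omega)]; omega),
        hval n (by omega), Nat.mod_eq_of_lt (by omega)]
      omega
    rw [harg]

/-- `H²_ImHop |W²⟩ = 0`, and for a contiguous segment `Λ = {ℓ,…,r}` (no
wrap-around) the truncation `(i/2) ∑_{j=ℓ}^{r−2} (…)` acts on `|W²⟩` as the boundary operator
`(i/2)(n_ℓ n_{ℓ+1} − n_{r−1} n_r)`. -/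
theorem H2ImHop_W2_and_truncated_boundary_action (N : ℕ) [NeZero N] (hN : 3 ≤ N)
    (ℓ r : Fin N) (hlr : ℓ < r) :
    H2ImHop N (W2 N) = 0
      ∧ ((Complex.I / 2) •
            ∑ j : Fin N,
              if ℓ ≤ j ∧ (j : ℕ) + 2 ≤ (r : ℕ) then
                aDag j ∘ₗ aDag (j + 1) ∘ₗ aOp (j + 1) ∘ₗ aOp (j + 1 + 1)
                  - aDag (j + 1 + 1) ∘ₗ aDag (j + 1) ∘ₗ aOp (j + 1) ∘ₗ aOp j
              else 0)
          (W2 N)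
        = ((Complex.I / 2) • (nOp ℓ ∘ₗ nOp (ℓ + 1) - nOp (r - 1) ∘ₗ nOp r)) (W2 N) := by
  constructor
  · rw [H2ImHop, LinearMap.smul_apply, LinearMap.sum_apply]
    have h1 : ∑ j : Fin N,
        (aDag j ∘ₗ aDag (j + 1) ∘ₗ aOp (j + 1) ∘ₗ aOp (j + 1 + 1)
          - aDag (j + 1 + 1) ∘ₗ aDag (j + 1) ∘ₗ aOp (j + 1) ∘ₗ aOp j) (W2 N)
        = ∑ j : Fin N, (Fop N j - Fop N (j + 1)) :=
      Finset.sum_congr rfl fun j _ => key_lemma' N hN j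
    rw [h1, Finset.sum_sub_distrib,
      Fintype.sum_equiv (Equiv.addRight (1 : Fin N)) (fun j => Fop N (j + 1)) (Fop N)
        (fun j => rfl),
      sub_self, smul_zero]
  · rw [LinearMap.smul_apply, LinearMap.sum_apply, LinearMap.smul_apply, LinearMap.sub_apply]
    have h1 : ∑ j : Fin N,
        ((if ℓ ≤ j ∧ (j : ℕ) + 2 ≤ (r : ℕ) then
            aDag j ∘ₗ aDag (j + 1) ∘ₗ aOp (j + 1) ∘ₗ aOp (j + 1 + 1)
              - aDag (j + 1 + 1) ∘ₗ aDag (j + 1) ∘ₗ aOp (j + 1) ∘ₗ aOp j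
          else 0) (W2 N))
        = ∑ j : Fin N,
            (if ℓ ≤ j ∧ (j : ℕ) + 2 ≤ (r : ℕ) then Fop N j - Fop N (j + 1) else 0) := by
      refine Finset.sum_congr rfl fun j _ => ?_
      split_ifs with h
      · exact key_lemma' N hN j
      · rfl
    rw [h1, telescope_sum N hN ℓ r hlr]
    have h2 : (nOp (r - 1) ∘ₗ nOp r) (W2 N) = Fop N (r - 1) := by
      rw [Fop, sub_add_cancel]
    rw [h2]
    rfl

end
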